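/- arXiv:1512.07569 — 6 statements merged into one kernel-verified Lean document; each statement's English description precedes it below -/
import Mathlib

section
/- If the conic program CP (minimize c·x subject to x ∈ Affine and x ∈ K) has bounded optimal value, then any x ∈ Affine with c·x < c·e satisfies λ_min(x) < 1. -/
open RealInnerProductSpace

/-- Lemma 2.2: if CP has bounded optimal value, then any `x ∈ Affine` with
`c·x < c·e` satisfies `λ_min(x) < 1`. -/
theorem lamMin_lt_one_of_bdd
    {E : Type*} [NormedAddCommGroup E] [InnerProductSpace ℝ E] [FiniteDimensional ℝ E]
    (K : Set E) (hKclosed : IsClosed K) (hKconv : Convex ℝ K)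
    (hKcone : ∀ t : ℝ, 0 < t → ∀ x ∈ K, t • x ∈ K)
    (hKpointed : ∀ x, x ∈ K → -x ∈ K → x = 0)
    (hKproper : K ≠ Set.univ)
    (S : AffineSubspace ℝ E) (c : E)
    (e : E) (heS : e ∈ S) (heK : e ∈ interior K)
    (lamMin : E → ℝ)
    (hlam : ∀ x, lamMin x = sSup {l : ℝ | x - l • e ∈ K})
    (hbdd : BddBelow ((fun x => ⟪c, x⟫) '' ((S : Set E) ∩ K))) :
    ∀ x ∈ (S : Set E), ⟪c, x⟫ < ⟪c, e⟫ → lamMin x < 1 := by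
  intro x hxS hcx
  by_contra hcon
  push_neg at hcon
  rw [hlam] at hcon
  set A := {l : ℝ | x - l • e ∈ K} with hAdef
  have heK' : e ∈ K := interior_subset heK
  have hKadd : ∀ a ∈ K, ∀ b ∈ K, a + b ∈ K := by
    intro a ha b hb
    have h2 : (1/2 : ℝ) • a + (1/2 : ℝ) • b ∈ K :=
      hKconv ha hb (by norm_num) (by norm_num) (by norm_num)
    have := hKcone 2 (by norm_num) _ h2
    simpa [smul_add, smul_smul] using this
  have hdown : ∀ a ∈ K, ∀ t : ℝ, 0 ≤ t → a + t • e ∈ K := by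
    intro a ha t ht
    rcases ht.eq_or_lt with h0 | h0
    · simp [← h0, ha]
    · exact hKadd a ha _ (hKcone t h0 e heK')
  -- A is nonempty and bounded above (else sSup A = 0 < 1)
  have hne : A.Nonempty := by
    by_contra hne
    rw [Set.not_nonempty_iff_eq_empty] at hne
    rw [hne, Real.sSup_empty] at hcon
    linarith
  have hbddA : BddAbove A := by
    by_contra hb
    rw [Real.sSup_of_not_bddAbove hb] at hcon
    linarith
  have hAclosed : IsClosed A := by
    have : A = (fun l : ℝ => x - l • e) ⁻¹' K := rfl
    rw [this]
    exact hKclosed.preimage (by continuity)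
  have hmem : sSup A ∈ A := hAclosed.csSup_mem hne hbddA
  have hxe : x - e ∈ K := by
    have heq : x - e = (x - sSup A • e) + (sSup A - 1) • e := by module
    rw [heq]
    exact hdown _ hmem _ (by linarith)
  obtain ⟨m, hm⟩ := hbdd
  set d : ℝ := ⟪c, x⟫ - ⟪c, e⟫ with hddef
  have hd : d < 0 := by simp [hddef]; linarith
  set t : ℝ := max 1 ((⟪c, e⟫ - m + 1) / (-d)) with htdef
  have ht1 : (1 : ℝ) ≤ t := le_max_left _ _
  have ht0 : (0 : ℝ) < t := by linarith
  set z : E := t • (x - e) + e with hzdef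
  have hzS : z ∈ S := by
    have := AffineSubspace.smul_vsub_vadd_mem S t hxS heS heS
    simpa [vsub_eq_sub, vadd_eq_add, hzdef] using this
  have hzK : z ∈ K := hKadd _ (hKcone t ht0 _ hxe) e heK'
  have hmz : m ≤ ⟪c, z⟫ := hm ⟨z, ⟨hzS, hzK⟩, rfl⟩
  have hcz : ⟪c, z⟫ = t * d + ⟪c, e⟫ := by
    simp [hzdef, inner_add_right, inner_smul_right, inner_sub_right, hddef]
  have htge : (⟪c, e⟫ - m + 1) / (-d) ≤ t := le_max_right _ _
  rw [div_le_iff₀ (by linarith : (0:ℝ) < -d)] at htge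
  have : t * (-d) = -(t * d) := by ring
  rw [this] at htge
  rw [hcz] at hmz
  linarith
end

section
/- Let z < c·e. If x* solves sup{λ_min(x) : x ∈ Affine, c·x = z}, then its radial projection π(x*) = e + (1/(1−λ_min(x*)))(x* − e) is optimal for CP. Conversely, if π* is optimal for CP with optimal value z*, then x* := e + ((c·e − z)/(c·e − z*))(π* − e) is optimal for the sup problem and π* = π(x*). -/
open RealInnerProductSpace

set_option maxHeartbeats 2000000 in
/-- Theorem 2.3: radial projection gives the correspondence between optimal solutions
of CP and of the equivalent problem `sup{λ_min(x) : x ∈ Affine, c·x = z}` for `z < c·e`. -/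
theorem radial_projection_optimality
    {E : Type*} [NormedAddCommGroup E] [InnerProductSpace ℝ E] [FiniteDimensional ℝ E]
    (K : Set E) (hKclosed : IsClosed K) (hKconv : Convex ℝ K)
    (hKcone : ∀ t : ℝ, 0 < t → ∀ x ∈ K, t • x ∈ K)
    (hKpointed : ∀ x, x ∈ K → -x ∈ K → x = 0)
    (hKproper : K ≠ Set.univ)
    (S : AffineSubspace ℝ E) (c : E)
    (hc : ∃ v ∈ S.direction, ⟪c, v⟫ ≠ 0)
    (e : E) (heS : e ∈ S) (heK : e ∈ interior K)
    (lamMin : E → ℝ)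
    (hlam : ∀ x, lamMin x = sSup {l : ℝ | x - l • e ∈ K})
    (π : E → E)
    (hπ : ∀ x, π x = e + (1 - lamMin x)⁻¹ • (x - e))
    (z zstar : ℝ) (hz : z < ⟪c, e⟫)
    (hzstar : ∃ x, (x ∈ S ∧ x ∈ K ∧ ∀ y, y ∈ S → y ∈ K → ⟪c, x⟫ ≤ ⟪c, y⟫) ∧
      ⟪c, x⟫ = zstar) :
    (∀ xs, xs ∈ S → ⟪c, xs⟫ = z →
        (∀ y, y ∈ S → ⟪c, y⟫ = z → lamMin y ≤ lamMin xs) →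
        (π xs ∈ S ∧ π xs ∈ K ∧ ∀ y, y ∈ S → y ∈ K → ⟪c, π xs⟫ ≤ ⟪c, y⟫)) ∧
    (∀ ps, (ps ∈ S ∧ ps ∈ K ∧ ∀ y, y ∈ S → y ∈ K → ⟪c, ps⟫ ≤ ⟪c, y⟫) →
        ((e + ((⟪c, e⟫ - z) / (⟪c, e⟫ - zstar)) • (ps - e)) ∈ S ∧
          ⟪c, e + ((⟪c, e⟫ - z) / (⟪c, e⟫ - zstar)) • (ps - e)⟫ = z ∧
          (∀ y, y ∈ S → ⟪c, y⟫ = z →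
            lamMin y ≤ lamMin (e + ((⟪c, e⟫ - z) / (⟪c, e⟫ - zstar)) • (ps - e))) ∧
          ps = π (e + ((⟪c, e⟫ - z) / (⟪c, e⟫ - zstar)) • (ps - e)))) := by
  classical
  obtain ⟨ps0, ⟨hps0S, hps0K, hps0opt⟩, hps0z⟩ := hzstar
  have heK' : e ∈ K := interior_subset heK
  obtain ⟨ε, hε, hball⟩ : ∃ ε > 0, Metric.ball e ε ⊆ K := by
    obtain ⟨ε, hε, hball⟩ := Metric.isOpen_iff.mp isOpen_interior e heK
    exact ⟨ε, hε, hball.trans interior_subset⟩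
  have he0 : e ≠ 0 := by
    intro h
    subst h
    apply hKproper
    ext x
    simp only [Set.mem_univ, iff_true]
    rcases eq_or_ne x 0 with rfl | hx
    · exact hball (by simp [hε])
    · have hn : 0 < ‖x‖ := norm_pos_iff.mpr hx
      set t : ℝ := 2 * ‖x‖ / ε with ht
      have htpos : 0 < t := by positivity
      have hmem : t⁻¹ • x ∈ Metric.ball (0 : E) ε := by
        rw [Metric.mem_ball, dist_zero_right, norm_smul, Real.norm_eq_abs, abs_inv,
          abs_of_pos htpos]
        have h1 : t⁻¹ * ‖x‖ = ε / 2 := by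
          rw [ht]; field_simp
        rw [h1]; linarith
      have := hKcone t htpos _ (hball hmem)
      rwa [smul_inv_smul₀ (ne_of_gt htpos)] at this
  have hneg : -e ∉ K := fun h => he0 (hKpointed e heK' h)
  have hadd : ∀ a ∈ K, ∀ b ∈ K, a + b ∈ K := by
    intro a ha b hb
    have h2 := hKconv ha hb (by norm_num : (0:ℝ) ≤ 1/2) (by norm_num : (0:ℝ) ≤ 1/2)
      (by norm_num)
    have h3 := hKcone 2 (by norm_num) _ h2
    have h4 : (2:ℝ) • ((1/2 : ℝ) • a + (1/2 : ℝ) • b) = a + b := by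
      rw [smul_add, smul_smul, smul_smul]; norm_num
    rwa [h4] at h3
  have hdc : ∀ x : E, ∀ l l' : ℝ, l' ≤ l → x - l • e ∈ K → x - l' • e ∈ K := by
    intro x l l' hle h
    rcases eq_or_lt_of_le hle with rfl | hlt
    · exact h
    · have he' : (l - l') • e ∈ K := hKcone _ (by linarith) e heK'
      have h2 := hadd _ h _ he'
      have heq : x - l • e + (l - l') • e = x - l' • e := by
        rw [sub_smul]; abel
      rwa [heq] at h2
  have hne : ∀ x : E, Set.Nonempty {l : ℝ | x - l • e ∈ K} := by
    intro x
    set t : ℝ := ‖x‖ / ε + 1 with ht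
    have htpos : 0 < t := by positivity
    refine ⟨-t, ?_⟩
    have hmem : t⁻¹ • x + e ∈ Metric.ball e ε := by
      rw [Metric.mem_ball, dist_eq_norm, add_sub_cancel_right, norm_smul, Real.norm_eq_abs,
        abs_inv, abs_of_pos htpos]
      rw [inv_mul_lt_iff₀ htpos]
      have h1 : t * ε = ‖x‖ + ε := by rw [ht]; field_simp
      rw [h1]
      linarith
    have h2 := hKcone t htpos _ (hball hmem)
    have heq : t • (t⁻¹ • x + e) = x - (-t) • e := by
      rw [smul_add, smul_inv_smul₀ (ne_of_gt htpos), neg_smul, sub_neg_eq_add]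
    rw [heq] at h2
    exact h2
  have hbdd : ∀ x : E, BddAbove {l : ℝ | x - l • e ∈ K} := by
    intro x
    by_contra hb
    have hall : ∀ l : ℝ, x - l • e ∈ K := by
      intro l
      obtain ⟨l', hl', hlt⟩ := not_bddAbove_iff.mp hb l
      exact hdc x l' l hlt.le hl'
    have hmem : ∀ n : ℕ, ((n : ℝ) + 1)⁻¹ • x - e ∈ K := by
      intro n
      have h1 := hall ((n : ℝ) + 1)
      have h2 := hKcone ((n : ℝ) + 1)⁻¹ (by positivity) _ h1
      rwa [smul_sub, smul_smul, inv_mul_cancel₀ (by positivity), one_smul] at h2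
    have hten : Filter.Tendsto (fun n : ℕ => ((n : ℝ) + 1)⁻¹ • x - e) Filter.atTop
        (nhds (-e)) := by
      have h1 : Filter.Tendsto (fun n : ℕ => ((n : ℝ) + 1)⁻¹) Filter.atTop (nhds 0) := by
        simpa only [one_div] using tendsto_one_div_add_atTop_nhds_zero_nat (𝕜 := ℝ)
      have h2 := (h1.smul_const x).sub_const e
      simpa using h2
    exact hneg (hKclosed.mem_of_tendsto hten (Filter.Eventually.of_forall hmem))
  have hmemsup : ∀ x : E, x - lamMin x • e ∈ K := by
    intro x
    have hcl : IsClosed {l : ℝ | x - l • e ∈ K} := by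
      have hcont : Continuous fun l : ℝ => x - l • e := by continuity
      exact hKclosed.preimage hcont
    have := hcl.csSup_mem (hne x) (hbdd x)
    rw [hlam x]
    exact this
  have hiff : ∀ (x : E) (l : ℝ), x - l • e ∈ K ↔ l ≤ lamMin x := by
    intro x l
    constructor
    · intro h; rw [hlam]; exact le_csSup (hbdd x) h
    · intro h; exact hdc x (lamMin x) l h (hmemsup x)
  have hKiff : ∀ x : E, x ∈ K ↔ 0 ≤ lamMin x := by
    intro x
    have := hiff x 0
    simpa using this
  have hSmem : ∀ x ∈ S, ∀ t : ℝ, e + t • (x - e) ∈ S := by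
    intro x hx t
    have h1 : x - e ∈ S.direction := AffineSubspace.vsub_mem_direction hx heS
    have h2 : t • (x - e) ∈ S.direction := S.direction.smul_mem t h1
    have h3 := AffineSubspace.vadd_mem_of_mem_direction h2 heS
    simpa [vadd_eq_add, add_comm] using h3
  have hcval : ∀ (x : E) (t : ℝ), ⟪c, e + t • (x - e)⟫ = ⟪c, e⟫ + t * (⟪c, x⟫ - ⟪c, e⟫) := by
    intro x t
    rw [inner_add_right, real_inner_smul_right, inner_sub_right]
  have hscale : ∀ (x : E) (t : ℝ), 0 < t →
      lamMin (e + t • (x - e)) = 1 + t * (lamMin x - 1) := by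
    intro x t ht
    have hset : {l : ℝ | (e + t • (x - e)) - l • e ∈ K} = Set.Iic (1 + t * (lamMin x - 1)) := by
      ext l
      have heq : (e + t • (x - e)) - l • e = t • (x - ((l + t - 1) / t) • e) := by
        have h1 : t * ((l + t - 1) / t) = l + t - 1 := mul_div_cancel₀ _ (ne_of_gt ht)
        rw [smul_sub, smul_sub, smul_smul, h1, sub_smul, add_smul, one_smul]
        abel
      have htK : (e + t • (x - e)) - l • e ∈ K ↔ x - ((l + t - 1) / t) • e ∈ K := by
        rw [heq]
        constructor
        · intro h
          have := hKcone t⁻¹ (by positivity) _ h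
          rwa [inv_smul_smul₀ (ne_of_gt ht)] at this
        · exact hKcone t ht _
      simp only [Set.mem_setOf_eq, Set.mem_Iic, htK, hiff x]
      rw [div_le_iff₀ ht]
      constructor <;> intro h <;> nlinarith
    rw [hlam, hset, csSup_Iic]
  have hzlt : zstar < ⟪c, e⟫ := by
    obtain ⟨v, hv, hcv⟩ := hc
    have hvne : v ≠ 0 := by intro h; apply hcv; simp [h]
    set u : E := if 0 < ⟪c, v⟫ then -v else v with hu
    have huS : u ∈ S.direction := by
      rw [hu]; split
      · exact S.direction.neg_mem hv
      · exact hv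
    have hcu : ⟪c, u⟫ < 0 := by
      rw [hu]; split
      · rename_i h; rw [inner_neg_right]; linarith
      · rename_i h; push_neg at h; exact lt_of_le_of_ne h hcv
    have hun : 0 < ‖u‖ := by
      rw [hu]; split <;> simp [norm_pos_iff, hvne]
    set δ : ℝ := ε / (2 * ‖u‖) with hδ
    have hδpos : 0 < δ := by positivity
    have hqK : e + δ • u ∈ K := by
      apply hball
      rw [Metric.mem_ball, dist_eq_norm, add_sub_cancel_left, norm_smul, Real.norm_eq_abs,
        abs_of_pos hδpos]
      have : δ * ‖u‖ = ε / 2 := by rw [hδ]; field_simp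
      rw [this]; linarith
    have hqS : e + δ • u ∈ S := by
      have h3 := AffineSubspace.vadd_mem_of_mem_direction (S.direction.smul_mem δ huS) heS
      simpa [vadd_eq_add, add_comm] using h3
    have hle := hps0opt _ hqS hqK
    rw [hps0z, inner_add_right, real_inner_smul_right] at hle
    nlinarith
  have hub : ∀ y ∈ S, ⟪c, y⟫ = z → lamMin y < 1 := by
    intro y hy hyz
    by_contra h
    push_neg at h
    have h1z : 0 < ⟪c, e⟫ - z := by linarith
    have h1s : 0 < ⟪c, e⟫ - zstar := by linarith
    set t : ℝ := (⟪c, e⟫ - zstar) / (⟪c, e⟫ - z) + 1 with ht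
    have htpos : 0 < t := by positivity
    have hqS := hSmem y hy t
    have hqK : e + t • (y - e) ∈ K := by
      apply (hKiff _).mpr
      rw [hscale y t htpos]
      nlinarith
    have hle := hps0opt _ hqS hqK
    rw [hps0z, hcval y t, hyz] at hle
    have hkey : t * (⟪c, e⟫ - z) = (⟪c, e⟫ - zstar) + (⟪c, e⟫ - z) := by
      rw [ht]; field_simp; try ring
    nlinarith
  constructor
  · -- Part 1
    intro xs hxsS hxsz hxsopt
    have hlt : lamMin xs < 1 := hub xs hxsS hxsz
    have h1m : 0 < 1 - lamMin xs := by linarith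
    have htpos : 0 < (1 - lamMin xs)⁻¹ := inv_pos.mpr h1m
    rw [hπ xs]
    have hxK : e + (1 - lamMin xs)⁻¹ • (xs - e) ∈ K := by
      apply (hKiff _).mpr
      rw [hscale xs _ htpos]
      have hneg1 : (1 - lamMin xs)⁻¹ * (lamMin xs - 1) = -1 := by
        rw [show lamMin xs - 1 = -(1 - lamMin xs) from by ring, mul_neg,
          inv_mul_cancel₀ (ne_of_gt h1m)]
      rw [hneg1]; norm_num
    refine ⟨hSmem xs hxsS _, hxK, ?_⟩
    intro y hyS hyK
    have h2 : zstar ≤ ⟪c, y⟫ := by rw [← hps0z]; exact hps0opt y hyS hyK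
    rw [hcval xs, hxsz]
    have h1z : 0 < ⟪c, e⟫ - z := by linarith
    have h1s : 0 < ⟪c, e⟫ - zstar := by linarith
    set s : ℝ := (⟪c, e⟫ - z) / (⟪c, e⟫ - zstar) with hs
    have hspos : 0 < s := by positivity
    have hsl : s * (⟪c, e⟫ - zstar) = ⟪c, e⟫ - z := div_mul_cancel₀ _ (ne_of_gt h1s)
    have hy0S := hSmem ps0 hps0S s
    have hy0z : ⟪c, e + s • (ps0 - e)⟫ = z := by
      rw [hcval, hps0z]
      nlinarith
    have hps0lam : 0 ≤ lamMin ps0 := (hKiff _).mp hps0K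
    have hge := hxsopt _ hy0S hy0z
    rw [hscale ps0 s hspos] at hge
    have hles : 1 - lamMin xs ≤ s := by nlinarith [mul_nonneg hspos.le hps0lam]
    have hinv : (⟪c, e⟫ - zstar) * (1 - lamMin xs) ≤ ⟪c, e⟫ - z := by nlinarith
    have hone : (1 - lamMin xs) * (1 - lamMin xs)⁻¹ = 1 := mul_inv_cancel₀ (ne_of_gt h1m)
    nlinarith [mul_le_mul_of_nonneg_right hinv htpos.le]
  · -- Part 2
    rintro ps ⟨hpsS, hpsK, hpsopt⟩
    have hpsz : ⟪c, ps⟫ = zstar :=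
      le_antisymm (by rw [← hps0z]; exact hpsopt ps0 hps0S hps0K)
        (by rw [← hps0z]; exact hps0opt ps hpsS hpsK)
    have h1z : 0 < ⟪c, e⟫ - z := by linarith
    have h1s : 0 < ⟪c, e⟫ - zstar := by linarith
    set s : ℝ := (⟪c, e⟫ - z) / (⟪c, e⟫ - zstar) with hs
    have hspos : 0 < s := by positivity
    have hsl : s * (⟪c, e⟫ - zstar) = ⟪c, e⟫ - z := div_mul_cancel₀ _ (ne_of_gt h1s)
    have hpslam : lamMin ps = 0 := by
      have h0 : 0 ≤ lamMin ps := (hKiff ps).mp hpsK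
      by_contra hμ
      have hμpos : 0 < lamMin ps := lt_of_le_of_ne h0 (Ne.symm hμ)
      have key : ∀ t : ℝ, 1 < t → 0 ≤ 1 + t * (lamMin ps - 1) → False := by
        intro t ht hnn
        have htpos : 0 < t := by linarith
        have hqS := hSmem ps hpsS t
        have hqK : e + t • (ps - e) ∈ K := by
          apply (hKiff _).mpr
          rw [hscale ps t htpos]
          exact hnn
        have hle := hpsopt _ hqS hqK
        rw [hpsz, hcval ps t, hpsz] at hle
        nlinarith
      by_cases hμ1 : lamMin ps < 1
      · have h1m : 0 < 1 - lamMin ps := by linarith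
        have hone : (1 - lamMin ps) * (1 - lamMin ps)⁻¹ = 1 := mul_inv_cancel₀ (ne_of_gt h1m)
        have hinvpos : 0 < (1 - lamMin ps)⁻¹ := inv_pos.mpr h1m
        refine key (1 - lamMin ps)⁻¹ ?_ ?_
        · nlinarith
        · have : (1 - lamMin ps)⁻¹ * (lamMin ps - 1) = -1 := by
            rw [show lamMin ps - 1 = -(1 - lamMin ps) from by ring, mul_neg,
              inv_mul_cancel₀ (ne_of_gt h1m)]
          rw [this]; norm_num
      · push_neg at hμ1
        exact key 2 one_lt_two (by nlinarith)
    have hxlam : lamMin (e + s • (ps - e)) = 1 - s := by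
      rw [hscale ps s hspos, hpslam]; ring
    refine ⟨hSmem ps hpsS s, ?_, ?_, ?_⟩
    · rw [hcval, hpsz]
      linear_combination -hsl
    · intro y hyS hyz
      have hylt : lamMin y < 1 := hub y hyS hyz
      have h1my : 0 < 1 - lamMin y := by linarith
      have hinvpos : 0 < (1 - lamMin y)⁻¹ := inv_pos.mpr h1my
      have hqS := hSmem y hyS (1 - lamMin y)⁻¹
      have hqK : e + (1 - lamMin y)⁻¹ • (y - e) ∈ K := by
        apply (hKiff _).mpr
        rw [hscale y _ hinvpos]
        have : (1 - lamMin y)⁻¹ * (lamMin y - 1) = -1 := by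
          rw [show lamMin y - 1 = -(1 - lamMin y) from by ring, mul_neg,
            inv_mul_cancel₀ (ne_of_gt h1my)]
        rw [this]; norm_num
      have hle := hpsopt _ hqS hqK
      rw [hpsz, hcval y, hyz] at hle
      have hone : (1 - lamMin y) * (1 - lamMin y)⁻¹ = 1 := mul_inv_cancel₀ (ne_of_gt h1my)
      rw [hxlam]
      have hkey : s ≤ 1 - lamMin y := by
        rw [hs, div_le_iff₀ h1s]
        nlinarith [mul_le_mul_of_nonneg_right hle h1my.le]
      linarith
    · rw [hπ, hxlam]
      rw [show e + s • (ps - e) - e = s • (ps - e) from by abel]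
      rw [show (1 : ℝ) - (1 - s) = s from by ring]
      rw [smul_smul, inv_mul_cancel₀ (ne_of_gt hspos), one_smul]
      abel
end

section
/- The optimal value λ*_{min,z} of sup{λ_min(x) : x ∈ Affine, c·x = z} equals (z − z*)/(c·e − z*), where z* is the optimal value of CP. -/
open RealInnerProductSpace

/-- Lemma 2.4: `λ*_{min,z} = (z − z*)/(c·e − z*)`. -/
theorem lamMinStar_eq
    {E : Type*} [NormedAddCommGroup E] [InnerProductSpace ℝ E] [FiniteDimensional ℝ E]
    (K : Set E) (hKclosed : IsClosed K) (hKconv : Convex ℝ K)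
    (hKcone : ∀ t : ℝ, 0 < t → ∀ x ∈ K, t • x ∈ K)
    (hKpointed : ∀ x, x ∈ K → -x ∈ K → x = 0)
    (hKproper : K ≠ Set.univ)
    (S : AffineSubspace ℝ E) (c : E)
    (hc : ∃ v ∈ S.direction, ⟪c, v⟫ ≠ 0)
    (e : E) (heS : e ∈ S) (heK : e ∈ interior K)
    (lamMin : E → ℝ)
    (hlam : ∀ x, lamMin x = sSup {l : ℝ | x - l • e ∈ K})
    (z zstar : ℝ) (hz : z < ⟪c, e⟫)
    (hzstar : ∃ x, (x ∈ S ∧ x ∈ K ∧ ∀ y, y ∈ S → y ∈ K → ⟪c, x⟫ ≤ ⟪c, y⟫) ∧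
      ⟪c, x⟫ = zstar) :
    sSup {r : ℝ | ∃ x, x ∈ S ∧ ⟪c, x⟫ = z ∧ r = lamMin x} =
      (z - zstar) / (⟪c, e⟫ - zstar) := by
  obtain ⟨xs, ⟨hxsS, hxsK, hxsmin⟩, hxsz⟩ := hzstar
  have heK' : e ∈ K := interior_subset heK
  -- z* ≤ c·e
  have hzse : zstar ≤ ⟪c, e⟫ := by
    have := hxsmin e heS heK'
    rw [hxsz] at this; exact this
  -- lower bound z* on S ∩ K
  have hlb : ∀ y, y ∈ S → y ∈ K → zstar ≤ ⟪c, y⟫ := by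
    intro y hyS hyK
    have := hxsmin y hyS hyK
    rw [hxsz] at this; exact this
  -- K is closed under addition
  have hadd : ∀ a ∈ K, ∀ b ∈ K, a + b ∈ K := by
    intro a ha b hb
    have h2 := hKconv ha hb (by norm_num : (0:ℝ) ≤ 1/2) (by norm_num : (0:ℝ) ≤ 1/2)
      (by norm_num)
    have := hKcone 2 (by norm_num) _ h2
    have heq : (2:ℝ) • ((1/2:ℝ) • a + (1/2:ℝ) • b) = a + b := by
      rw [smul_add, smul_smul, smul_smul]; norm_num
    rwa [heq] at this
  -- each set {l | x - l•e ∈ K} is nonempty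
  have hLne : ∀ x : E, ∃ l : ℝ, x - l • e ∈ K := by
    intro x
    obtain ⟨ε, hε, hball⟩ := Metric.mem_nhds_iff.mp (mem_interior_iff_mem_nhds.mp heK)
    set m : ℝ := ‖x‖ / ε + 1 with hm
    have hm0 : 0 < m := by positivity
    have hmem : e + m⁻¹ • x ∈ K := by
      apply hball
      rw [Metric.mem_ball, dist_eq_norm]
      have : e + m⁻¹ • x - e = m⁻¹ • x := by abel
      rw [this, norm_smul, norm_inv, Real.norm_eq_abs, abs_of_pos hm0]
      rw [inv_mul_lt_iff₀ hm0]
      have hlt : ‖x‖ / ε < m := by rw [hm]; linarith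
      exact (div_lt_iff₀ hε).mp hlt
    refine ⟨-m, ?_⟩
    have := hKcone m hm0 _ hmem
    have heq : m • (e + m⁻¹ • x) = x - (-m) • e := by
      rw [smul_add, smul_smul, mul_inv_cancel₀ (ne_of_gt hm0), one_smul, neg_smul]
      abel
    rwa [heq] at this
  -- if x - l•e ∈ K with l ≥ 1 then x ∈ K
  have hxK : ∀ x : E, ∀ l : ℝ, 1 ≤ l → x - l • e ∈ K → x ∈ K := by
    intro x l hl hmem
    have hle : l • e ∈ K := hKcone l (by linarith) e heK'
    have := hadd _ hmem _ hle
    have heq : x - l • e + l • e = x := by abel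
    rwa [heq] at this
  -- key inequality for l < 1
  have hA : ∀ x, x ∈ S → ⟪c, x⟫ = z → ∀ l : ℝ, l < 1 → x - l • e ∈ K →
      l * (⟪c, e⟫ - zstar) ≤ z - zstar := by
    intro x hxS hxz l hl hmem
    have h1l : (0:ℝ) < 1 - l := by linarith
    set y : E := (1 - l)⁻¹ • (x - l • e) with hy
    have hyK : y ∈ K := hKcone _ (by positivity) _ hmem
    have hyS : y ∈ S := by
      have hdir : ((1 - l)⁻¹ * l) • (x - e) ∈ S.direction :=
        Submodule.smul_mem _ _ (AffineSubspace.vsub_mem_direction hxS heS)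
      have := AffineSubspace.vadd_mem_of_mem_direction hdir hxS
      have heq : ((1 - l)⁻¹ * l) • (x - e) +ᵥ x = y := by
        show ((1 - l)⁻¹ * l) • (x - e) + x = (1 - l)⁻¹ • (x - l • e)
        have h1l' : (1 - l) ≠ 0 := ne_of_gt h1l
        match_scalars <;> field_simp <;> ring
      rwa [heq] at this
    have h1 := hlb y hyS hyK
    have h2 : ⟪c, y⟫ = (1 - l)⁻¹ * (z - l * ⟪c, e⟫) := by
      rw [hy, real_inner_smul_right, inner_sub_right, real_inner_smul_right, hxz]
    rw [h2] at h1
    have h3 : (1 - l) * zstar ≤ z - l * ⟪c, e⟫ := by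
      have := mul_le_mul_of_nonneg_left h1 (le_of_lt h1l)
      rwa [← mul_assoc, mul_inv_cancel₀ (ne_of_gt h1l), one_mul] at this
    nlinarith
  -- main case split
  by_cases hdeg : ⟪c, e⟫ = zstar
  · -- degenerate case: c·e = z*, so z < z* and all the L-sets are empty
    have hzz : z < zstar := by rw [← hdeg]; exact hz
    -- there exists x ∈ S with c·x = z
    obtain ⟨v, hvS, hcv⟩ := hc
    set x0 : E := ((z - ⟪c, e⟫) / ⟪c, v⟫) • v + e with hx0
    have hx0S : x0 ∈ S :=
      AffineSubspace.vadd_mem_of_mem_direction (Submodule.smul_mem _ _ hvS) heS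
    have hx0z : ⟪c, x0⟫ = z := by
      rw [hx0, inner_add_right, real_inner_smul_right]
      field_simp
      ring
    have hempty : ∀ x, x ∈ S → ⟪c, x⟫ = z → {l : ℝ | x - l • e ∈ K} = ∅ := by
      intro x hxS hxz
      ext l
      simp only [Set.mem_setOf_eq, Set.mem_empty_iff_false, iff_false]
      intro hmem
      rcases lt_or_ge l 1 with hl | hl
      · have := hA x hxS hxz l hl hmem
        rw [hdeg, sub_self, mul_zero] at this
        linarith
      · have hxinK := hxK x l hl hmem
        have := hlb x hxS hxinK
        rw [hxz] at this
        linarith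
    have hset : {r : ℝ | ∃ x, x ∈ S ∧ ⟪c, x⟫ = z ∧ r = lamMin x} = {0} := by
      ext r
      simp only [Set.mem_setOf_eq, Set.mem_singleton_iff]
      constructor
      · rintro ⟨x, hxS, hxz, rfl⟩
        rw [hlam, hempty x hxS hxz, Real.sSup_empty]
      · rintro rfl
        exact ⟨x0, hx0S, hx0z, by rw [hlam, hempty x0 hx0S hx0z, Real.sSup_empty]⟩
    rw [hset, csSup_singleton, hdeg, sub_self, div_zero]
  · -- nondegenerate case
    have hce : zstar < ⟪c, e⟫ := lt_of_le_of_ne hzse (Ne.symm hdeg)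
    have hce0 : ⟪c, e⟫ - zstar > 0 := by linarith
    set t0 : ℝ := (z - zstar) / (⟪c, e⟫ - zstar) with ht0
    have ht01 : t0 < 1 := by
      rw [ht0, div_lt_one hce0]; linarith
    -- upper bound: every l in any L-set is ≤ t0
    have hD : ∀ x, x ∈ S → ⟪c, x⟫ = z → ∀ l : ℝ, x - l • e ∈ K → l ≤ t0 := by
      intro x hxS hxz l hmem
      rcases lt_or_ge l 1 with hl | hl
      · have := hA x hxS hxz l hl hmem
        rw [ht0, le_div_iff₀ hce0]; linarith
      · exfalso
        set s : ℝ := max (1/2) ((t0 + 1) / 2) with hs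
        have hs1 : s < 1 := by
          rw [hs]; apply max_lt <;> [norm_num; linarith]
        have hs0 : 0 < s := lt_of_lt_of_le (by norm_num) (le_max_left _ _)
        have hst : t0 < s := lt_of_lt_of_le (by linarith) (le_max_right _ _)
        have hl0 : (0:ℝ) < l := by linarith
        have hxinK := hxK x l hl hmem
        have hsl : s / l ≤ 1 := by
          rw [div_le_one hl0]; linarith
        have hsl0 : 0 ≤ s / l := by positivity
        have hmem2 : x - s • e ∈ K := by
          have := hKconv hxinK hmem (by linarith : (0:ℝ) ≤ 1 - s/l) hsl0 (by ring)
          have heq : (1 - s/l) • x + (s/l) • (x - l • e) = x - s • e := by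
            rw [smul_sub, sub_smul, one_smul, smul_smul]
            rw [div_mul_cancel₀ _ (ne_of_gt hl0)]
            abel
          rwa [heq] at this
        have := hA x hxS hxz s hs1 hmem2
        have : s ≤ t0 := by rw [ht0, le_div_iff₀ hce0]; linarith
        linarith
    -- the witness x0 = xs + t0 • (e - xs)
    set x0 : E := t0 • (e - xs) + xs with hx0
    have hx0S : x0 ∈ S :=
      AffineSubspace.vadd_mem_of_mem_direction
        (Submodule.smul_mem _ _ (AffineSubspace.vsub_mem_direction heS hxsS)) hxsS
    have hx0z : ⟪c, x0⟫ = z := by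
      rw [hx0, inner_add_right, real_inner_smul_right, inner_sub_right, hxsz, ht0]
      field_simp
      ring
    have hx0mem : x0 - t0 • e ∈ K := by
      have heq : x0 - t0 • e = (1 - t0) • xs := by
        rw [hx0, smul_sub, sub_smul, one_smul]; abel
      rw [heq]
      exact hKcone _ (by linarith) _ hxsK
    have hx0lam : lamMin x0 = t0 := by
      rw [hlam]
      apply le_antisymm
      · exact csSup_le ⟨t0, hx0mem⟩ (fun l hl => hD x0 hx0S hx0z l hl)
      · exact le_csSup ⟨t0, fun l hl => hD x0 hx0S hx0z l hl⟩ hx0mem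
    have hne : {r : ℝ | ∃ x, x ∈ S ∧ ⟪c, x⟫ = z ∧ r = lamMin x}.Nonempty :=
      ⟨t0, x0, hx0S, hx0z, hx0lam.symm⟩
    apply le_antisymm
    · apply csSup_le hne
      rintro r ⟨x, hxS, hxz, rfl⟩
      rw [hlam]
      exact csSup_le (hLne x) (fun l hl => hD x hxS hxz l hl)
    · have hbdd : BddAbove {r : ℝ | ∃ x, x ∈ S ∧ ⟪c, x⟫ = z ∧ r = lamMin x} := by
        refine ⟨t0, ?_⟩
        rintro r ⟨x, hxS, hxz, rfl⟩
        rw [hlam]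
        exact csSup_le (hLne x) (fun l hl => hD x hxS hxz l hl)
      exact le_csSup hbdd ⟨x0, hx0S, hx0z, hx0lam.symm⟩
end

section
/- For x ∈ Affine with c·x = z (z < c·e) and 0 < ε < 1: (c·π(x) − z*)/(c·e − z*) ≤ ε if and only if λ*_{min,z} − λ_min(x) ≤ (ε/(1−ε))·((c·e − z)/(c·e − z*)). -/
open RealInnerProductSpace

lemma aux_alg (ce z zs l ε : ℝ) (hA : 0 < ce - zs) (hB : 0 < ce - z) (hμ : 0 < 1 - l)
    (hε1 : ε < 1) :
    (ce + (1 - l)⁻¹ * (z - ce) - zs) / (ce - zs) ≤ ε ↔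
      1 - (ce - z) / (ce - zs) - l ≤ ε / (1 - ε) * ((ce - z) / (ce - zs)) := by
  have hε' : 0 < 1 - ε := by linarith
  have h1 : (1 - l)⁻¹ * (z - ce) = -((ce - z) / (1 - l)) := by field_simp; ring
  have key1 : (ce + (1 - l)⁻¹ * (z - ce) - zs) / (ce - zs) ≤ ε ↔
      (1 - ε) * (ce - zs) * (1 - l) ≤ ce - z := by
    rw [div_le_iff₀ hA, h1]
    constructor
    · intro h
      have h2 : (1 - ε) * (ce - zs) ≤ (ce - z) / (1 - l) := by linarith
      have := (le_div_iff₀ hμ).1 h2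
      nlinarith
    · intro h
      have h2 : (1 - ε) * (ce - zs) ≤ (ce - z) / (1 - l) := (le_div_iff₀ hμ).2 (by nlinarith)
      linarith
  have key2 : 1 - (ce - z) / (ce - zs) - l ≤ ε / (1 - ε) * ((ce - z) / (ce - zs)) ↔
      (1 - ε) * (ce - zs) * (1 - l) ≤ ce - z := by
    have hq : ε / (1 - ε) + 1 = 1 / (1 - ε) := by field_simp; ring
    constructor
    · intro h
      have h2 : 1 - l ≤ (ε / (1 - ε) + 1) * ((ce - z) / (ce - zs)) := by linarith [h]
      rw [hq] at h2
      have h3 : (1 - l) * (1 - ε) ≤ (ce - z) / (ce - zs) := by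
        rw [div_mul_eq_mul_div, le_div_iff₀ hε'] at h2
        linarith [h2]
      have := (le_div_iff₀ hA).1 h3
      nlinarith
    · intro h
      have h3 : (1 - l) * (1 - ε) ≤ (ce - z) / (ce - zs) := (le_div_iff₀ hA).2 (by nlinarith)
      have h2 : 1 - l ≤ (1 / (1 - ε)) * ((ce - z) / (ce - zs)) := by
        rw [div_mul_eq_mul_div, le_div_iff₀ hε']
        linarith [h3]
      rw [← hq] at h2
      nlinarith [h2]
  rw [key1, key2]

/-- Proposition 2.5: for `x ∈ Affine_z` (`z < c·e`) and `0 < ε < 1`,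
`(c·π(x) − z*)/(c·e − z*) ≤ ε` iff
`λ*_{min,z} − λ_min(x) ≤ (ε/(1−ε))·((c·e − z)/(c·e − z*))`. -/
theorem relative_error_iff
    {E : Type*} [NormedAddCommGroup E] [InnerProductSpace ℝ E] [FiniteDimensional ℝ E]
    (K : Set E) (hKclosed : IsClosed K) (hKconv : Convex ℝ K)
    (hKcone : ∀ t : ℝ, 0 < t → ∀ x ∈ K, t • x ∈ K)
    (hKpointed : ∀ x, x ∈ K → -x ∈ K → x = 0)
    (hKproper : K ≠ Set.univ)
    (S : AffineSubspace ℝ E) (c : E)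
    (hc : ∃ v ∈ S.direction, ⟪c, v⟫ ≠ 0)
    (e : E) (heS : e ∈ S) (heK : e ∈ interior K)
    (lamMin : E → ℝ)
    (hlam : ∀ x, lamMin x = sSup {l : ℝ | x - l • e ∈ K})
    (π : E → E)
    (hπ : ∀ x, π x = e + (1 - lamMin x)⁻¹ • (x - e))
    (z zstar : ℝ) (hz : z < ⟪c, e⟫)
    (hzstar : ∃ x, (x ∈ S ∧ x ∈ K ∧ ∀ y, y ∈ S → y ∈ K → ⟪c, x⟫ ≤ ⟪c, y⟫) ∧
      ⟪c, x⟫ = zstar)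
    (lamStar : ℝ)
    (hlamStar : lamStar = sSup {r : ℝ | ∃ x, x ∈ S ∧ ⟪c, x⟫ = z ∧ r = lamMin x})
    (x : E) (hxS : x ∈ S) (hxz : ⟪c, x⟫ = z)
    (ε : ℝ) (hε0 : 0 < ε) (hε1 : ε < 1) :
    (⟪c, π x⟫ - zstar) / (⟪c, e⟫ - zstar) ≤ ε ↔
      lamStar - lamMin x ≤ (ε / (1 - ε)) * ((⟪c, e⟫ - z) / (⟪c, e⟫ - zstar)) := by
  obtain ⟨xopt, ⟨hoS, hoK, hopt⟩, hoval⟩ := hzstar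
  have heK' : e ∈ K := interior_subset heK
  obtain ⟨δ, hδpos, hball⟩ := Metric.mem_nhds_iff.1 (mem_interior_iff_mem_nhds.1 heK)
  -- K is closed under addition
  have hadd : ∀ a ∈ K, ∀ b ∈ K, a + b ∈ K := by
    intro a ha b hb
    have h2 : (1 / 2 : ℝ) • a + (1 / 2 : ℝ) • b ∈ K :=
      hKconv ha hb (by norm_num) (by norm_num) (by norm_num)
    have h3 := hKcone 2 (by norm_num) _ h2
    have h4 : (2 : ℝ) • ((1 / 2 : ℝ) • a + (1 / 2 : ℝ) • b) = a + b := by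
      rw [smul_add, smul_smul, smul_smul]; norm_num
    rwa [h4] at h3
  -- e ≠ 0
  have hne : e ≠ 0 := by
    intro h
    apply hKproper
    ext y
    simp only [Set.mem_univ, iff_true]
    rw [h] at hball
    rcases eq_or_ne y 0 with rfl | hy
    · exact hball (Metric.mem_ball_self hδpos)
    · have hnorm : 0 < ‖y‖ := norm_pos_iff.2 hy
      set t : ℝ := δ / (2 * ‖y‖) with ht
      have htpos : 0 < t := by positivity
      have hmem : t • y ∈ K := by
        apply hball
        rw [Metric.mem_ball, dist_zero_right, norm_smul, Real.norm_eq_abs,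
          abs_of_pos htpos, ht]
        rw [div_mul_eq_mul_div, div_lt_iff₀ (by positivity)]
        nlinarith
      have := hKcone t⁻¹ (by positivity) _ hmem
      rwa [smul_smul, inv_mul_cancel₀ htpos.ne', one_smul] at this
  have hnegE : -e ∉ K := fun h => hne (hKpointed e heK' h)
  -- the sub-level sets of lamMin
  have hLclosed : ∀ y : E, IsClosed {l : ℝ | y - l • e ∈ K} := by
    intro y
    exact hKclosed.preimage (by fun_prop)
  have hLne : ∀ y : E, Set.Nonempty {l : ℝ | y - l • e ∈ K} := by
    intro y
    set t : ℝ := ‖y‖ / δ + 1 with ht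
    have htpos : 0 < t := by positivity
    refine ⟨-t, ?_⟩
    have key : y - (-t) • e = t • (e + t⁻¹ • y) := by
      rw [smul_add, smul_smul, mul_inv_cancel₀ htpos.ne', one_smul, neg_smul]
      abel
    show y - (-t) • e ∈ K
    rw [key]
    apply hKcone t htpos
    apply hball
    rw [Metric.mem_ball, dist_eq_norm]
    have : e + t⁻¹ • y - e = t⁻¹ • y := by abel
    rw [this, norm_smul, Real.norm_eq_abs, abs_of_pos (by positivity)]
    rw [inv_mul_eq_div, div_lt_iff₀ htpos]
    have hdt : δ * t = ‖y‖ + δ := by rw [ht]; field_simp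
    linarith
  have hdown : ∀ (y : E) (l l' : ℝ), l ≤ l' → y - l' • e ∈ K → y - l • e ∈ K := by
    intro y l l' hll h
    rcases eq_or_lt_of_le hll with rfl | hlt
    · exact h
    · have key : y - l • e = (y - l' • e) + (l' - l) • e := by
        rw [sub_smul]; abel
      rw [key]
      exact hadd _ h _ (hKcone _ (by linarith) e heK')
  have hLbdd : ∀ y : E, BddAbove {l : ℝ | y - l • e ∈ K} := by
    intro y
    by_contra hb
    have hn : ∀ n : ℕ, y - ((n : ℝ) + 1) • e ∈ K := by
      intro n
      obtain ⟨l, hl, hgt⟩ := not_bddAbove_iff.1 hb ((n : ℝ) + 1)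
      exact hdown y _ l hgt.le hl
    have hmem : ∀ n : ℕ, ((n : ℝ) + 1)⁻¹ • y - e ∈ K := by
      intro n
      have hp : (0 : ℝ) < (n : ℝ) + 1 := by positivity
      have := hKcone ((n : ℝ) + 1)⁻¹ (by positivity) _ (hn n)
      rwa [smul_sub, smul_smul, inv_mul_cancel₀ hp.ne', one_smul] at this
    have htend : Filter.Tendsto (fun n : ℕ => ((n : ℝ) + 1)⁻¹ • y - e)
        Filter.atTop (nhds (-e)) := by
      have h1 : Filter.Tendsto (fun n : ℕ => ((n : ℝ) + 1)⁻¹) Filter.atTop (nhds 0) := by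
        simpa only [one_div] using tendsto_one_div_add_atTop_nhds_zero_nat (𝕜 := ℝ)
      have h2 := (h1.smul_const y).sub_const e
      simpa using h2
    exact hnegE (hKclosed.mem_of_tendsto htend (Filter.Eventually.of_forall hmem))
  have hsup_mem : ∀ y : E, y - lamMin y • e ∈ K := by
    intro y
    have := (hLclosed y).csSup_mem (hLne y) (hLbdd y)
    rwa [← hlam y] at this
  have hle_sup : ∀ (y : E) (l : ℝ), y - l • e ∈ K → l ≤ lamMin y := by
    intro y l h
    rw [hlam]
    exact le_csSup (hLbdd y) h
  -- membership in S of points on lines through e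
  have hmemS : ∀ y ∈ S, ∀ t : ℝ, e + t • (y - e) ∈ S := by
    intro y hy t
    have hv : y - e ∈ S.direction := AffineSubspace.vsub_mem_direction hy heS
    have := AffineSubspace.vadd_mem_of_mem_direction (S.direction.smul_mem t hv) heS
    simpa [vadd_eq_add, add_comm] using this
  -- zstar < ⟪c, e⟫
  have hzse : zstar ≤ ⟪c, e⟫ := hoval ▸ hopt e heS heK'
  have hApos : 0 < ⟪c, e⟫ - zstar := by
    obtain ⟨v, hv, hcv⟩ := hc
    have hvne : v ≠ 0 := by rintro rfl; simp at hcv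
    set w : E := if ⟪c, v⟫ < 0 then v else -v with hw
    have hwd : w ∈ S.direction := by
      rw [hw]; split_ifs
      · exact hv
      · exact S.direction.neg_mem hv
    have hcw : ⟪c, w⟫ < 0 := by
      rw [hw]; split_ifs with h
      · exact h
      · rw [inner_neg_right]
        push_neg at h
        exact neg_neg_of_pos (lt_of_le_of_ne h (Ne.symm hcv))
    have hwne : w ≠ 0 := by
      intro h; rw [h, inner_zero_right] at hcw; exact lt_irrefl 0 hcw
    have hwnorm : 0 < ‖w‖ := norm_pos_iff.2 hwne
    set t : ℝ := δ / (2 * ‖w‖) with htdef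
    have htpos : 0 < t := div_pos hδpos (by linarith)
    have hpS : e + t • w ∈ S := by
      have := AffineSubspace.vadd_mem_of_mem_direction (S.direction.smul_mem t hwd) heS
      simpa [vadd_eq_add, add_comm] using this
    have hpK : e + t • w ∈ K := by
      apply hball
      rw [Metric.mem_ball, dist_eq_norm]
      have h1 : e + t • w - e = t • w := by abel
      rw [h1, norm_smul, Real.norm_eq_abs, abs_of_pos htpos, htdef]
      rw [div_mul_eq_mul_div, div_lt_iff₀ (by linarith : (0:ℝ) < 2 * ‖w‖)]
      nlinarith
    have := hoval ▸ hopt _ hpS hpK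
    have hval : ⟪c, e + t • w⟫ = ⟪c, e⟫ + t * ⟪c, w⟫ := by
      rw [inner_add_right, real_inner_smul_right]
    nlinarith
  -- lamMin y < 1 on sub-level points
  have hA1 : ∀ y ∈ S, ⟪c, y⟫ < ⟪c, e⟫ → lamMin y < 1 := by
    intro y hyS hyc
    by_contra hcon
    push_neg at hcon
    have hu : y - lamMin y • e ∈ K := hsup_mem y
    set t : ℝ := (⟪c, e⟫ - zstar + 1) / (⟪c, e⟫ - ⟪c, y⟫) with htdef
    have hden : (0 : ℝ) < ⟪c, e⟫ - ⟪c, y⟫ := by linarith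
    have htpos : 0 < t := div_pos (by linarith) hden
    have hpS : e + t • (y - e) ∈ S := hmemS y hyS t
    have hpK : e + t • (y - e) ∈ K := by
      have h1 : e + t • (y - e) = (1 + t * (lamMin y - 1)) • e + t • (y - lamMin y • e) := by
        module
      rw [h1]
      exact hadd _ (hKcone _ (by nlinarith) e heK') _ (hKcone t htpos _ hu)
    have hle := hoval ▸ hopt _ hpS hpK
    have hval : ⟪c, e + t • (y - e)⟫ = ⟪c, e⟫ + t * (⟪c, y⟫ - ⟪c, e⟫) := by
      rw [inner_add_right, real_inner_smul_right, inner_sub_right]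
    have hcancel : t * (⟪c, e⟫ - ⟪c, y⟫) = ⟪c, e⟫ - zstar + 1 :=
      div_mul_cancel₀ _ hden.ne'
    nlinarith
  set A : ℝ := ⟪c, e⟫ - zstar with hAdef
  set B : ℝ := ⟪c, e⟫ - z with hBdef
  have hBpos : 0 < B := by rw [hBdef]; linarith
  have hDpos : 0 < B / A := div_pos hBpos hApos
  -- upper bound on the set defining lamStar
  have hub : ∀ r ∈ {r : ℝ | ∃ x', x' ∈ S ∧ ⟪c, x'⟫ = z ∧ r = lamMin x'}, r ≤ 1 - B / A := by
    rintro r ⟨x', hx'S, hx'z, rfl⟩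
    have hlm : lamMin x' < 1 := hA1 x' hx'S (by rw [hx'z]; exact hz)
    set μ : ℝ := 1 - lamMin x' with hμdef
    have hμpos : 0 < μ := by rw [hμdef]; linarith
    have hqK : μ⁻¹ • (x' - lamMin x' • e) ∈ K := hKcone _ (by positivity) _ (hsup_mem x')
    have hq_eq : μ⁻¹ • (x' - lamMin x' • e) = e + μ⁻¹ • (x' - e) := by
      have h1 : x' - lamMin x' • e = μ • e + (x' - e) := by
        rw [hμdef, sub_smul, one_smul]; abel
      rw [h1, smul_add, smul_smul, inv_mul_cancel₀ hμpos.ne', one_smul]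
    rw [hq_eq] at hqK
    have hqS : e + μ⁻¹ • (x' - e) ∈ S := hmemS x' hx'S _
    have hzq := hoval ▸ hopt _ hqS hqK
    have hval : ⟪c, e + μ⁻¹ • (x' - e)⟫ = ⟪c, e⟫ + μ⁻¹ * (z - ⟪c, e⟫) := by
      rw [inner_add_right, real_inner_smul_right, inner_sub_right, hx'z]
    -- derive B ≤ A * μ
    have h2 : μ⁻¹ * B ≤ A := by
      have hr : μ⁻¹ * (z - ⟪c, e⟫) = -(μ⁻¹ * B) := by rw [hBdef]; ring
      rw [hval, hr] at hzq
      rw [hAdef]; linarith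
    have h3 : B ≤ A * μ := by
      have h4 : μ * (μ⁻¹ * B) = B := by
        rw [← mul_assoc, mul_inv_cancel₀ hμpos.ne', one_mul]
      nlinarith [mul_le_mul_of_nonneg_left h2 hμpos.le]
    have h5 : B / A ≤ μ := (div_le_iff₀ hApos).2 (by linarith)
    rw [hμdef] at h5; linarith
  -- the witness achieving 1 - B/A
  set x1 : E := e + (B / A) • (xopt - e) with hx1def
  have hx1S : x1 ∈ S := hmemS xopt hoS (B / A)
  have hx1z : ⟪c, x1⟫ = z := by
    have hval : ⟪c, x1⟫ = ⟪c, e⟫ + (B / A) * (zstar - ⟪c, e⟫) := by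
      rw [hx1def, inner_add_right, real_inner_smul_right, inner_sub_right, hoval]
    have h2 : B / A * A = B := div_mul_cancel₀ _ hApos.ne'
    have h3 : (B / A) * (zstar - ⟪c, e⟫) = -(B / A * A) := by rw [hAdef]; ring
    rw [hval, h3, h2, hBdef]; ring
  have hx1ge : 1 - B / A ≤ lamMin x1 := by
    apply hle_sup
    have h1 : x1 - (1 - B / A) • e = (B / A) • xopt := by
      rw [hx1def, sub_smul, one_smul, smul_sub]; abel
    rw [h1]
    exact hKcone _ hDpos _ hoK
  have hx1lam : lamMin x1 = 1 - B / A :=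
    le_antisymm (hub _ ⟨x1, hx1S, hx1z, rfl⟩) hx1ge
  have hbddS : BddAbove {r : ℝ | ∃ x', x' ∈ S ∧ ⟪c, x'⟫ = z ∧ r = lamMin x'} :=
    ⟨1 - B / A, hub⟩
  have hlamStar_eq : lamStar = 1 - B / A := by
    rw [hlamStar]
    refine le_antisymm (csSup_le ⟨lamMin x, ⟨x, hxS, hxz, rfl⟩⟩ hub) ?_
    exact le_csSup hbddS ⟨x1, hx1S, hx1z, hx1lam.symm⟩
  -- final algebra
  have hlmx : lamMin x < 1 := hA1 x hxS (by rw [hxz]; exact hz)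
  have hπval : ⟪c, π x⟫ = ⟪c, e⟫ + (1 - lamMin x)⁻¹ * (z - ⟪c, e⟫) := by
    rw [hπ, inner_add_right, real_inner_smul_right, inner_sub_right, hxz]
  rw [hπval, hlamStar_eq]
  have := aux_alg ⟪c, e⟫ z zstar (lamMin x) ε hApos hBpos (by linarith) hε1
  rw [hAdef, hBdef]
  convert this using 2 <;> ring
end

section
/- If T : E → Ē is a linear transformation whose image intersects the interior of a hyperbolicity cone K̄ with hyperbolic polynomial p̄, then the pullback K := {x ∈ E : T(x) ∈ K̄} is a hyperbolicity cone with hyperbolic polynomial p(x) := p̄(T x). -/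
/-- A univariate real polynomial has only real roots (over `ℂ`). -/
def RealRooted (q : Polynomial ℝ) : Prop :=
  ∀ z : ℂ, (q.map (algebraMap ℝ ℂ)).IsRoot z → z.im = 0

/-- `K` is a hyperbolicity cone with hyperbolic polynomial (represented by) `P`,
homogeneous of degree `n`. -/
def IsHypConeWith (d n : ℕ) (K : Set (EuclideanSpace ℝ (Fin d)))
    (P : MvPolynomial (Fin d) ℝ) : Prop :=
  IsClosed K ∧ Convex ℝ K ∧ (∀ t : ℝ, 0 < t → ∀ x ∈ K, t • x ∈ K) ∧
  (interior K).Nonempty ∧ P.IsHomogeneous n ∧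
  (∀ x₀ ∈ interior K,
    interior K =
      connectedComponentIn {x | MvPolynomial.eval (fun i => x i) P ≠ 0} x₀) ∧
  ∀ e ∈ interior K, ∀ x : EuclideanSpace ℝ (Fin d), ∃ q : Polynomial ℝ,
    (∀ t : ℝ, q.eval t = MvPolynomial.eval (fun i => x i - t * e i) P) ∧
    RealRooted q

open MvPolynomial Filter Set

/-- decomposition of `T y` in coordinates -/
lemma lin_apply_eq {d d' : ℕ}
    (T : EuclideanSpace ℝ (Fin d) →ₗ[ℝ] EuclideanSpace ℝ (Fin d'))
    (y : EuclideanSpace ℝ (Fin d)) (i : Fin d') :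
    T y i = ∑ j, T (EuclideanSpace.single j 1) i * y j := by
  have hy : y = ∑ j, y j • EuclideanSpace.single j (1 : ℝ) := by
    have := (EuclideanSpace.basisFun (Fin d) ℝ).sum_repr y
    simp only [EuclideanSpace.basisFun_apply, EuclideanSpace.basisFun_repr] at this
    exact this.symm
  conv_lhs => rw [hy, map_sum]
  simp only [map_smul]
  rw [WithLp.ofLp_sum, Finset.sum_apply]
  simp [mul_comm]

/-- interior of convex preimage equals preimage of interior, provided the image
meets the interior. -/
lemma interior_preimage_eq {d d' : ℕ}
    (T : EuclideanSpace ℝ (Fin d) →ₗ[ℝ] EuclideanSpace ℝ (Fin d'))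
    {Kbar : Set (EuclideanSpace ℝ (Fin d'))} (hconv : Convex ℝ Kbar)
    (himg : ∃ x, T x ∈ interior Kbar) :
    interior (T ⁻¹' Kbar) = T ⁻¹' (interior Kbar) := by
  have hTc : Continuous T := T.continuous_of_finiteDimensional
  refine Subset.antisymm ?_ (preimage_interior_subset_interior_preimage hTc)
  intro x hx
  obtain ⟨x₁, hx₁⟩ := himg
  -- find ε > 0 with x + ε • (x - x₁) still in the preimage
  have hcont2 : Continuous fun ε : ℝ => x + ε • (x - x₁) := by continuity
  have h0 : x + (0 : ℝ) • (x - x₁) = x := by simp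
  have htd : Tendsto (fun ε : ℝ => x + ε • (x - x₁)) (nhds 0) (nhds x) := by
    have := hcont2.continuousAt (x := 0)
    rwa [ContinuousAt, h0] at this
  have hev : ∀ᶠ ε in nhds (0 : ℝ), x + ε • (x - x₁) ∈ interior (T ⁻¹' Kbar) :=
    htd.eventually (isOpen_interior.mem_nhds hx)
  obtain ⟨ε, hmem, hεpos⟩ :=
    ((hev.filter_mono nhdsWithin_le_nhds).and
      (eventually_mem_nhdsWithin (s := Ioi (0 : ℝ)))).exists
  have hεpos : (0 : ℝ) < ε := hεpos
  have ha : T x + ε • (T x - T x₁) ∈ Kbar := by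
    have := interior_subset hmem
    simpa [map_add, map_smul, map_sub] using this
  have h1ε : (0 : ℝ) < 1 + ε := by linarith
  have hcombo : (ε / (1 + ε)) • T x₁ + (1 / (1 + ε)) • (T x + ε • (T x - T x₁)) = T x := by
    match_scalars <;> field_simp <;> ring
  have := hconv.combo_interior_self_mem_interior hx₁ ha
    (a := ε / (1 + ε)) (b := 1 / (1 + ε))
    (by positivity) (by positivity) (show ε / (1 + ε) + 1 / (1 + ε) = 1 by field_simp [add_comm] <;> ring)
  rw [hcombo] at this
  exact this

/-- If `T : E → Ē` is linear and its image meets the interior of a hyperbolicity cone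
`K̄` with hyperbolic polynomial `p̄`, then the pullback `{x : T x ∈ K̄}` is a
hyperbolicity cone with hyperbolic polynomial `p(x) = p̄(T x)`. -/
theorem pullback_isHypConeWith {d d' n : ℕ}
    (T : EuclideanSpace ℝ (Fin d) →ₗ[ℝ] EuclideanSpace ℝ (Fin d'))
    {Kbar : Set (EuclideanSpace ℝ (Fin d'))} {Pbar : MvPolynomial (Fin d') ℝ}
    (h : IsHypConeWith d' n Kbar Pbar)
    (himg : ∃ x, T x ∈ interior Kbar) :
    ∃ P : MvPolynomial (Fin d) ℝ,
      (∀ x : EuclideanSpace ℝ (Fin d),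
        MvPolynomial.eval (fun i => x i) P =
          MvPolynomial.eval (fun i => T x i) Pbar) ∧
      IsHypConeWith d n {x | T x ∈ Kbar} P := by
  obtain ⟨hcl, hconv, hcone, hne, hhom, hcomp, hroot⟩ := h
  set g : Fin d' → MvPolynomial (Fin d) ℝ :=
    fun i => ∑ j, MvPolynomial.C (T (EuclideanSpace.single j 1) i) * MvPolynomial.X j with hg
  set P : MvPolynomial (Fin d) ℝ := MvPolynomial.aeval g Pbar with hP
  -- evaluation formula
  have hevalP : ∀ y : EuclideanSpace ℝ (Fin d),
      MvPolynomial.eval (fun i => y i) P = MvPolynomial.eval (fun i => T y i) Pbar := by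
    intro y
    rw [hP, aeval_def, eval_eval₂]
    have hcomp' : ((eval fun i => y i).comp (algebraMap ℝ (MvPolynomial (Fin d) ℝ)))
        = RingHom.id ℝ := RingHom.ext fun r => by simp [MvPolynomial.algebraMap_eq]
    rw [hcomp', eval₂_id]
    have harg : (fun s => MvPolynomial.eval (fun i => y i) (g s)) = fun i => T y i := by
      funext i
      rw [lin_apply_eq T y i, hg]
      simp
    rw [harg]
  have hKset : {x : EuclideanSpace ℝ (Fin d) | T x ∈ Kbar} = T ⁻¹' Kbar := rfl
  have hTc : Continuous T := T.continuous_of_finiteDimensional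
  have hInt : interior {x : EuclideanSpace ℝ (Fin d) | T x ∈ Kbar}
      = T ⁻¹' (interior Kbar) := by
    rw [hKset]; exact interior_preimage_eq T hconv himg
  have hKconv : Convex ℝ {x : EuclideanSpace ℝ (Fin d) | T x ∈ Kbar} := by
    rw [hKset]; exact hconv.linear_preimage T
  refine ⟨P, hevalP, hcl.preimage hTc, hKconv, ?_, ?_, ?_, ?_, ?_⟩
  · intro t ht x hx
    simp only [Set.mem_setOf_eq, map_smul]
    exact hcone t ht _ hx
  · obtain ⟨x₁, hx₁⟩ := himg
    exact ⟨x₁, by rw [hInt]; exact hx₁⟩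
  · have hg1 : ∀ i, (g i).IsHomogeneous 1 := fun i =>
      IsHomogeneous.sum _ _ _ fun j _ => (isHomogeneous_X _ _).C_mul _
    have := hhom.aeval g hg1
    rwa [one_mul] at this
  · -- connected components
    intro x₀ hx₀
    have hTx₀ : T x₀ ∈ interior Kbar := by rwa [hInt] at hx₀
    have hS : {x : EuclideanSpace ℝ (Fin d) | MvPolynomial.eval (fun i => x i) P ≠ 0}
        = T ⁻¹' {y | MvPolynomial.eval (fun i => y i) Pbar ≠ 0} := by
      ext x; simp [hevalP x]
    have hKbarcomp := hcomp (T x₀) hTx₀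
    refine Subset.antisymm ?_ ?_
    · -- interior K is connected, inside the nonvanishing set, contains x₀
      have hpre : IsPreconnected (interior {x : EuclideanSpace ℝ (Fin d) | T x ∈ Kbar}) :=
        (hKconv.interior).isPreconnected
      refine hpre.subset_connectedComponentIn hx₀ ?_
      intro x hx
      rw [hS]
      have : T x ∈ interior Kbar := by rwa [hInt] at hx
      rw [hKbarcomp] at this
      exact Set.mem_preimage.mpr (connectedComponentIn_subset _ _ this)
    · -- the component maps into interior Kbar
      intro x hx
      have hx₀S : x₀ ∈ {x : EuclideanSpace ℝ (Fin d) |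
          MvPolynomial.eval (fun i => x i) P ≠ 0} := by
        rw [hS]
        have := hKbarcomp ▸ hTx₀
        exact Set.mem_preimage.mpr (connectedComponentIn_subset _ _ this)
      have himage : T '' connectedComponentIn
          {x : EuclideanSpace ℝ (Fin d) | MvPolynomial.eval (fun i => x i) P ≠ 0} x₀
          ⊆ connectedComponentIn {y | MvPolynomial.eval (fun i => y i) Pbar ≠ 0} (T x₀) := by
        apply IsPreconnected.subset_connectedComponentIn
          ((isPreconnected_connectedComponentIn).image _ hTc.continuousOn)
        · exact ⟨x₀, mem_connectedComponentIn hx₀S, rfl⟩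
        · rintro y ⟨x', hx', rfl⟩
          have := connectedComponentIn_subset _ _ hx'
          rw [hS] at this
          exact this
      have : T x ∈ interior Kbar := by
        rw [hKbarcomp]
        exact himage ⟨x, hx, rfl⟩
      rw [hInt]
      exact this
  · -- real-rootedness
    intro e he x
    have hTe : T e ∈ interior Kbar := by rwa [hInt] at he
    obtain ⟨q, hq, hrr⟩ := hroot (T e) hTe (T x)
    refine ⟨q, fun t => ?_, hrr⟩
    rw [hq t]
    have h1 : (fun i => x i - t * e i) = (fun i => (x - t • e) i) := by
      funext i; simp
    have h2 : (fun i => T (x - t • e) i) = fun i => T x i - t * T e i := by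
      funext i
      simp [map_sub, map_smul]
    rw [h1, hevalP, h2]
end

section
/- For all u ∈ E, ‖u‖_∞ = max_j |λ_j(u)|, where λ_j(u) are the eigenvalues of u (the roots of λ ↦ p(u − λe)). -/
open MvPolynomial in
lemma homog_eval_mul {σ : Type*} {P : MvPolynomial σ ℝ} {n : ℕ}
    (hP : P.IsHomogeneous n) (c : ℝ) (x : σ → ℝ) :
    MvPolynomial.eval (fun i => c * x i) P = c ^ n * MvPolynomial.eval x P := by
  rw [eval_eq, eval_eq, Finset.mul_sum]
  refine Finset.sum_congr rfl fun d hd => ?_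
  have hdeg : d.degree = n := by
    by_contra h
    exact mem_support_iff.mp hd (hP.coeff_eq_zero h)
  calc P.coeff d * ∏ i ∈ d.support, (c * x i) ^ d i
      = P.coeff d * ((∏ i ∈ d.support, c ^ d i) * ∏ i ∈ d.support, x i ^ d i) := by
        rw [← Finset.prod_mul_distrib]; simp [mul_pow]
    _ = c ^ n * (P.coeff d * ∏ i ∈ d.support, x i ^ d i) := by
        rw [Finset.prod_pow_eq_pow_sum]
        rw [show ∑ i ∈ d.support, d i = n from hdeg ▸ rfl]
        ring

/-- Equation (2.4): `‖u‖_∞ = max_j |λ_j(u)|`, where `λ_j(u)` are the eigenvalues of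
`u`, i.e. the roots of `λ ↦ p(u − λe)`. -/
theorem normInf_eq_max_abs_eigenvalue
    {d n : ℕ} (hn : 0 < n)
    (K : Set (EuclideanSpace ℝ (Fin d)))
    (hKclosed : IsClosed K) (hKconv : Convex ℝ K)
    (hKcone : ∀ t : ℝ, 0 < t → ∀ x ∈ K, t • x ∈ K)
    (P : MvPolynomial (Fin d) ℝ) (hP : P.IsHomogeneous n)
    (e : EuclideanSpace ℝ (Fin d)) (he : e ∈ interior K)
    (hcomp : interior K =
      connectedComponentIn {x | MvPolynomial.eval (fun i => x i) P ≠ 0} e)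
    (q : EuclideanSpace ℝ (Fin d) → Polynomial ℝ)
    (hq : ∀ x t, (q x).eval t = MvPolynomial.eval (fun i => x i - t * e i) P)
    (hroots : ∀ x, Multiset.card (q x).roots = n)
    (nInf : EuclideanSpace ℝ (Fin d) → ℝ)
    (hnInf : ∀ u, nInf u =
      sInf {t : ℝ | 0 ≤ t ∧ ∃ v, (e + v ∈ K ∧ e - v ∈ K) ∧ u = t • v}) :
    ∀ u, nInf u = sSup {a : ℝ | ∃ lam ∈ (q u).roots, a = |lam|} := by
  
  set S : Set (EuclideanSpace ℝ (Fin d)) := {x | MvPolynomial.eval (fun i => x i) P ≠ 0} with hS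
  -- basic facts
  have hKe : e ∈ K := interior_subset he
  have h_int_S : interior K ⊆ S := hcomp ▸ connectedComponentIn_subset S e
  have hKadd : ∀ x ∈ K, ∀ y ∈ K, x + y ∈ K := by
    intro x hx y hy
    have h2 : (2:ℝ) • ((1/2 : ℝ) • x + (1/2 : ℝ) • y) ∈ K := by
      refine hKcone 2 (by norm_num) _ ?_
      exact hKconv hx hy (by norm_num) (by norm_num) (by norm_num)
    have : (2:ℝ) • ((1/2 : ℝ) • x + (1/2 : ℝ) • y) = x + y := by
      rw [smul_add, smul_smul, smul_smul]; norm_num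
    rwa [this] at h2
  have h_add_int : ∀ x ∈ K, ∀ y ∈ interior K, x + y ∈ interior K := by
    intro x hx y hy
    have hopen : IsOpen ((fun z => x + z) '' interior K) :=
      (isOpenMap_add_left x) _ isOpen_interior
    have hsub : (fun z => x + z) '' interior K ⊆ K := by
      rintro _ ⟨z, hz, rfl⟩
      exact hKadd x hx z (interior_subset hz)
    exact interior_maximal hsub hopen ⟨y, hy, rfl⟩
  have h_smul_int : ∀ t : ℝ, 0 < t → ∀ x ∈ interior K, t • x ∈ interior K := by
    intro t ht x hx
    have hopen : IsOpen ((fun z : EuclideanSpace ℝ (Fin d) => t • z) '' interior K) :=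
      (isOpenMap_smul₀ (ne_of_gt ht)) _ isOpen_interior
    have hsub : (fun z : EuclideanSpace ℝ (Fin d) => t • z) '' interior K ⊆ K := by
      rintro _ ⟨z, hz, rfl⟩
      exact hKcone t ht z (interior_subset hz)
    exact interior_maximal hsub hopen ⟨x, hx, rfl⟩
  have heS : e ∈ S :=
    connectedComponentIn_nonempty_iff.mp ⟨e, hcomp ▸ he⟩
  have hq0 : ∀ x : EuclideanSpace ℝ (Fin d), q x ≠ 0 := by
    intro x h
    have := hroots x
    rw [h, Polynomial.roots_zero] at this
    simp at this
    omega
  have hmem : ∀ (x : EuclideanSpace ℝ (Fin d)) (lam : ℝ),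
      lam ∈ (q x).roots ↔ MvPolynomial.eval (fun i => x i - lam * e i) P = 0 := by
    intro x lam
    rw [Polynomial.mem_roots (hq0 x), Polynomial.IsRoot, hq]
  -- root transformation lemmas
  have hshift : ∀ (v : EuclideanSpace ℝ (Fin d)) (s lam : ℝ),
      lam ∈ (q (v + s • e)).roots ↔ lam - s ∈ (q v).roots := by
    intro v s lam
    rw [hmem, hmem]
    have heq : MvPolynomial.eval (fun i => (v + s • e) i - lam * e i) P
        = MvPolynomial.eval (fun i => v i - (lam - s) * e i) P := by
      refine congrArg (fun f => MvPolynomial.eval f P) (funext fun i => ?_)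
      simp only [PiLp.add_apply, PiLp.smul_apply, smul_eq_mul]
      ring
    rw [heq]
  have hneg : ∀ (v : EuclideanSpace ℝ (Fin d)) (lam : ℝ),
      lam ∈ (q (-v)).roots ↔ -lam ∈ (q v).roots := by
    intro v lam
    rw [hmem, hmem]
    have heq : MvPolynomial.eval (fun i => (-v : EuclideanSpace ℝ (Fin d)) i - lam * e i) P
        = MvPolynomial.eval (fun i => (-1 : ℝ) * (v i - (-lam) * e i)) P := by
      refine congrArg (fun f => MvPolynomial.eval f P) (funext fun i => ?_)
      simp only [PiLp.neg_apply]
      ring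
    rw [heq, homog_eval_mul hP]
    constructor
    · intro h
      rcases mul_eq_zero.mp h with h' | h'
      · exact absurd h' (pow_ne_zero n (by norm_num))
      · exact h'
    · intro h; rw [h, mul_zero]
  have hscale : ∀ (v : EuclideanSpace ℝ (Fin d)) (t : ℝ), t ≠ 0 → ∀ lam : ℝ,
      (lam ∈ (q (t • v)).roots ↔ lam / t ∈ (q v).roots) := by
    intro v t ht lam
    rw [hmem, hmem]
    have heq : MvPolynomial.eval (fun i => (t • v : EuclideanSpace ℝ (Fin d)) i - lam * e i) P
        = MvPolynomial.eval (fun i => t * (v i - (lam / t) * e i)) P := by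
      refine congrArg (fun f => MvPolynomial.eval f P) (funext fun i => ?_)
      simp only [PiLp.smul_apply, smul_eq_mul]
      field_simp
    rw [heq, homog_eval_mul hP]
    constructor
    · intro h
      rcases mul_eq_zero.mp h with h' | h'
      · exact absurd h' (pow_ne_zero n ht)
      · exact h'
    · intro h; rw [h, mul_zero]
  -- K membership gives nonnegative roots
  have hKroots : ∀ x ∈ K, ∀ lam ∈ (q x).roots, 0 ≤ lam := by
    intro x hx lam hlam
    by_contra h
    push_neg at h
    have hmemint : x + (-lam) • e ∈ interior K :=
      h_add_int x hx _ (h_smul_int (-lam) (by linarith) e he)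
    have hSmem : x + (-lam) • e ∈ S := h_int_S hmemint
    apply hSmem
    show MvPolynomial.eval (fun i => (x + (-lam) • e) i) P = 0
    have heq : MvPolynomial.eval (fun i => ((x + (-lam) • e : EuclideanSpace ℝ (Fin d))) i) P
        = MvPolynomial.eval (fun i => x i - lam * e i) P := by
      refine congrArg (fun f => MvPolynomial.eval f P) (funext fun i => ?_)
      simp only [PiLp.add_apply, PiLp.smul_apply, smul_eq_mul]
      ring
    rw [heq]
    exact (hmem x lam).mp hlam
  -- positive roots give interior membership
  have hL8 : ∀ x : EuclideanSpace ℝ (Fin d), (∀ lam ∈ (q x).roots, 0 < lam) → x ∈ interior K := by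
    intro x hx
    have hSx : ∀ s : ℝ, 0 ≤ s → x + s • e ∈ S := by
      intro s hs
      show ¬ MvPolynomial.eval (fun i => (x + s • e) i) P = 0
      intro hzero
      have heq : MvPolynomial.eval (fun i => ((x + s • e : EuclideanSpace ℝ (Fin d))) i) P
          = MvPolynomial.eval (fun i => x i - (-s) * e i) P := by
        refine congrArg (fun f => MvPolynomial.eval f P) (funext fun i => ?_)
        simp only [PiLp.add_apply, PiLp.smul_apply, smul_eq_mul]
        ring
      rw [heq] at hzero
      have hr : (-s) ∈ (q x).roots := (hmem x (-s)).mpr hzero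
      have := hx _ hr
      linarith
    -- find s₀ with x + s₀ • e ∈ interior K
    obtain ⟨t, ht_mem, ht_pos⟩ : ∃ t : ℝ, e + t • x ∈ interior K ∧ 0 < t := by
      have hc : ContinuousAt (fun t : ℝ => e + t • x) 0 := by
        fun_prop
      have hev : ∀ᶠ t in nhds (0:ℝ), e + t • x ∈ interior K := by
        apply hc.eventually_mem
        simpa using isOpen_interior.mem_nhds he
      have : ∀ᶠ t in nhdsWithin (0:ℝ) (Set.Ioi 0),
          e + t • x ∈ interior K ∧ 0 < t :=
        (hev.filter_mono nhdsWithin_le_nhds).and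
          (eventually_mem_nhdsWithin.mono fun t ht => ht)
      exact this.exists
    have hs0 : x + t⁻¹ • e ∈ interior K := by
      have := h_smul_int t⁻¹ (by positivity) _ ht_mem
      have heq : t⁻¹ • (e + t • x) = x + t⁻¹ • e := by
        rw [smul_add, smul_smul, inv_mul_cancel₀ (ne_of_gt ht_pos), one_smul, add_comm]
      rwa [heq] at this
    -- connect x to x + t⁻¹ • e inside S
    set s₀ := t⁻¹ with hs₀
    have hs₀pos : 0 < s₀ := by positivity
    set L : Set (EuclideanSpace ℝ (Fin d)) := (fun s : ℝ => x + s • e) '' Set.Icc 0 s₀ with hL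
    have hLconn : IsPreconnected L := by
      apply IsPreconnected.image isPreconnected_Icc
      fun_prop
    have hLS : L ⊆ S := by
      rintro _ ⟨s, hs, rfl⟩
      exact hSx s hs.1
    have hxL : x ∈ L := ⟨0, ⟨le_refl 0, le_of_lt hs₀pos⟩, by simp⟩
    have hx2L : x + s₀ • e ∈ L := ⟨s₀, ⟨le_of_lt hs₀pos, le_refl s₀⟩, rfl⟩
    have hsubc : L ⊆ connectedComponentIn S x :=
      hLconn.subset_connectedComponentIn hxL hLS
    have h1 : connectedComponentIn S x = connectedComponentIn S (x + s₀ • e) :=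
      connectedComponentIn_eq (hsubc hx2L)
    have h2 : connectedComponentIn S e = connectedComponentIn S (x + s₀ • e) :=
      connectedComponentIn_eq (hcomp ▸ hs0)
    have hxS : x ∈ S := by
      have h := hSx 0 le_rfl
      simpa using h
    have hxmem : x ∈ connectedComponentIn S x := mem_connectedComponentIn hxS
    rw [hcomp, h2, ← h1]
    exact hxmem
  -- main argument
  intro u
  rw [hnInf u]
  set A : Set ℝ := {a | ∃ lam ∈ (q u).roots, a = |lam|} with hA
  set T : Set ℝ := {t | 0 ≤ t ∧ ∃ v, (e + v ∈ K ∧ e - v ∈ K) ∧ u = t • v} with hT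
  obtain ⟨lam0, hlam0⟩ : ∃ lam, lam ∈ (q u).roots := by
    have hcard := hroots u
    have hne : (q u).roots ≠ 0 := by
      intro h
      rw [h] at hcard
      simp at hcard
      omega
    exact Multiset.exists_mem_of_ne_zero hne
  have hAne : A.Nonempty := ⟨|lam0|, lam0, hlam0, rfl⟩
  have hAfin : A.Finite := by
    refine Set.Finite.subset ((q u).roots.toFinset.image (fun lam => |lam|)).finite_toSet ?_
    rintro a ⟨lam, hlam, rfl⟩
    simp only [Finset.coe_image, Set.mem_image, Finset.mem_coe, Multiset.mem_toFinset]
    exact ⟨lam, hlam, rfl⟩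
  have hAbdd : BddAbove A := hAfin.bddAbove
  set m := sSup A with hm
  have hub : ∀ lam ∈ (q u).roots, |lam| ≤ m := fun lam h => le_csSup hAbdd ⟨lam, h, rfl⟩
  have hm0 : 0 ≤ m := le_trans (abs_nonneg lam0) (hub lam0 hlam0)
  -- m is a lower bound of T
  have hlb : ∀ t ∈ T, m ≤ t := by
    rintro t ⟨ht0, v, ⟨hv1, hv2⟩, hu⟩
    refine csSup_le hAne ?_
    rintro a ⟨lam, hlam, rfl⟩
    rcases eq_or_lt_of_le ht0 with h0 | hpos
    · -- t = 0 : u = 0, all roots are 0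
      have hu' : u = (0:ℝ) • v := by rw [← h0] at hu; exact hu
      have h1 := (hmem u lam).mp hlam
      have heq : MvPolynomial.eval (fun i => u i - lam * e i) P
          = MvPolynomial.eval (fun i => (-lam) * e i) P := by
        refine congrArg (fun f => MvPolynomial.eval f P) (funext fun i => ?_)
        rw [hu']
        simp only [PiLp.smul_apply, smul_eq_mul, zero_mul]
        ring
      have h2 := homog_eval_mul hP (-lam) (fun i => e i)
      rw [heq, h2] at h1
      rcases mul_eq_zero.mp h1 with h3 | h3
      · have : lam = 0 := by
          have := pow_eq_zero_iff (n := n) (by omega) |>.mp h3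
          linarith [neg_eq_zero.mp this]
        rw [this, abs_zero, ← h0]
      · exact absurd h3 heS
    · -- t > 0
      have hvroots : ∀ μ ∈ (q v).roots, -1 ≤ μ ∧ μ ≤ 1 := by
        intro μ hμ
        constructor
        · have h1 : μ + 1 ∈ (q (v + (1:ℝ) • e)).roots :=
            (hshift v 1 (μ + 1)).mpr (by simpa using hμ)
          have hev : v + (1:ℝ) • e = e + v := by rw [one_smul, add_comm]
          rw [hev] at h1
          have := hKroots _ hv1 _ h1
          linarith
        · have hnegμ : -μ ∈ (q (-v)).roots := (hneg v (-μ)).mpr (by simpa using hμ)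
          have h1 : (-μ) + 1 ∈ (q ((-v) + (1:ℝ) • e)).roots :=
            (hshift (-v) 1 _).mpr (by simpa using hnegμ)
          have hev : (-v) + (1:ℝ) • e = e - v := by
            rw [one_smul, add_comm, ← sub_eq_add_neg]
          rw [hev] at h1
          have := hKroots _ hv2 _ h1
          linarith
      have hlamt : lam / t ∈ (q v).roots := by
        have h1 : lam ∈ (q (t • v)).roots := by rw [← hu]; exact hlam
        exact (hscale v t (ne_of_gt hpos) lam).mp h1
      obtain ⟨hge, hle⟩ := hvroots _ hlamt
      have habs : |lam / t| ≤ 1 := abs_le.mpr ⟨hge, hle⟩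
      calc |lam| = |lam / t| * t := by
            rw [abs_div, abs_of_pos hpos]
            field_simp
        _ ≤ 1 * t := mul_le_mul_of_nonneg_right habs (le_of_lt hpos)
        _ = t := one_mul t
  -- every m + ε is in T
  have hmem_T : ∀ ε : ℝ, 0 < ε → m + ε ∈ T := by
    intro ε hε
    have htpos : 0 < m + ε := by linarith
    have htne : (m + ε) ≠ 0 := ne_of_gt htpos
    refine ⟨le_of_lt htpos, (m + ε)⁻¹ • u, ⟨?_, ?_⟩, (smul_inv_smul₀ htne u).symm⟩
    · -- e + v ∈ K
      refine interior_subset (hL8 _ ?_)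
      intro μ hμ
      have hev : e + (m + ε)⁻¹ • u = ((m + ε)⁻¹ • u) + (1:ℝ) • e := by
        rw [one_smul, add_comm]
      rw [hev] at hμ
      have h1 : μ - 1 ∈ (q ((m + ε)⁻¹ • u)).roots := (hshift _ 1 μ).mp hμ
      have h2 : (μ - 1) / (m + ε)⁻¹ ∈ (q u).roots :=
        (hscale u (m + ε)⁻¹ (by positivity) _).mp h1
      rw [div_inv_eq_mul] at h2
      have h4 := hub _ h2
      have habs : |μ - 1| * (m + ε) ≤ m := by
        rwa [abs_mul, abs_of_pos htpos] at h4
      have h3 : 1 - μ ≤ |μ - 1| := by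
        rw [abs_sub_comm]
        exact le_abs_self _
      nlinarith [mul_le_mul_of_nonneg_right h3 htpos.le]
    · -- e - v ∈ K
      refine interior_subset (hL8 _ ?_)
      intro μ hμ
      have hev : e - (m + ε)⁻¹ • u = (-((m + ε)⁻¹ • u)) + (1:ℝ) • e := by
        rw [one_smul, sub_eq_add_neg, add_comm]
      rw [hev] at hμ
      have h1 : μ - 1 ∈ (q (-((m + ε)⁻¹ • u))).roots := (hshift _ 1 μ).mp hμ
      have h1' : -(μ - 1) ∈ (q ((m + ε)⁻¹ • u)).roots := (hneg _ _).mp h1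
      have h2 : (-(μ - 1)) / (m + ε)⁻¹ ∈ (q u).roots :=
        (hscale u (m + ε)⁻¹ (by positivity) _).mp h1'
      rw [div_inv_eq_mul] at h2
      have h4 := hub _ h2
      have habs : |(-(μ - 1))| * (m + ε) ≤ m := by
        rwa [abs_mul, abs_of_pos htpos] at h4
      have h3 : 1 - μ ≤ |(-(μ - 1))| := by
        rw [neg_sub]
        exact le_abs_self _
      nlinarith [mul_le_mul_of_nonneg_right h3 htpos.le]
  have hTne : T.Nonempty := ⟨m + 1, hmem_T 1 one_pos⟩
  have hTbdd : BddBelow T := ⟨0, fun t ht => ht.1⟩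
  apply le_antisymm
  · refine le_of_forall_gt_imp_ge_of_dense fun a ha => ?_
    have h1 := hmem_T (a - m) (by linarith)
    have h2 : m + (a - m) = a := by ring
    rw [h2] at h1
    exact csInf_le hTbdd h1
  · exact le_csInf hTne hlb
end
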